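/- Let f : (a,b) → (0,∞) be a positive probability density on a bounded interval with c.d.f. F and quantile function F^{-1}. Then f is strictly log-concave on (a,b) if and only if f ∘ F^{-1} is strictly concave on (0,1). -/

import Mathlib

open Real Set in
private lemma aux_lt_of_deriv {p q : ℝ} (hpq : p < q) {G H g₁ g₂ : ℝ → ℝ}
    (hGc : ContinuousOn G (Set.Icc p q)) (hHc : ContinuousOn H (Set.Icc p q))
    (hG : ∀ s ∈ Set.Ioo p q, HasDerivAt G (g₁ s) s)
    (hH : ∀ s ∈ Set.Ioo p q, HasDerivAt H (g₂ s) s)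
    (hlt : ∀ s ∈ Set.Ioo p q, g₁ s < g₂ s) :
    G q - G p < H q - H p := by
  have hm : StrictMonoOn (fun s => H s - G s) (Set.Icc p q) := by
    apply strictMonoOn_of_deriv_pos (convex_Icc p q) (hHc.sub hGc)
    intro s hs
    rw [interior_Icc] at hs
    rw [((hH s hs).sub (hG s hs)).deriv]
    exact sub_pos.2 (hlt s hs)
  have := hm (left_mem_Icc.2 hpq.le) (right_mem_Icc.2 hpq.le) hpq
  simp only at this
  linarith

open Real Set in
private lemma aux_hasDerivAt_exp (c k y : ℝ) (hk : k ≠ 0) (s : ℝ) :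
    HasDerivAt (fun s => (c / k) * Real.exp (k * (s - y))) (c * Real.exp (k * (s - y))) s := by
  have h1 : HasDerivAt (fun s : ℝ => k * (s - y)) (k * 1) s :=
    ((hasDerivAt_id s).sub_const y).const_mul k
  have h2 := (h1.exp).const_mul (c / k)
  refine h2.congr_deriv ?_
  field_simp

open Real Set in
private lemma aux_hasDerivAt_log {c k v : ℝ} (hk : k ≠ 0) {F : ℝ → ℝ} {fs : ℝ} {s : ℝ}
    (hF : HasDerivAt F fs s) (hpos : 0 < c + k * (F s - v)) :
    HasDerivAt (fun s => (1 / k) * Real.log (c + k * (F s - v)))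
      (fs / (c + k * (F s - v))) s := by
  have h1 : HasDerivAt (fun s => c + k * (F s - v)) (k * fs) s :=
    (((hF.sub_const v).const_mul k).const_add c)
  have h2 := (h1.log hpos.ne').const_mul (1 / k)
  refine h2.congr_deriv ?_
  field_simp

open Real Set in
private lemma aux_exp_ub {x y c k : ℝ} {F f : ℝ → ℝ} (hxy : x < y) (hk : k ≠ 0)
    (hFc : ContinuousOn F (Set.Icc x y))
    (hFd : ∀ s ∈ Set.Ioo x y, HasDerivAt F (f s) s)
    (hub : ∀ s ∈ Set.Ioo x y, f s < c * Real.exp (k * (s - y))) :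
    F y - F x < c / k * (1 - Real.exp (k * (x - y))) := by
  have h := aux_lt_of_deriv hxy hFc (by fun_prop) hFd
    (fun s _ => aux_hasDerivAt_exp c k y hk s) hub
  simp only [sub_self, mul_zero, Real.exp_zero, mul_one] at h
  linarith [h]

open Real Set in
private lemma aux_exp_lb {x y c k : ℝ} {F f : ℝ → ℝ} (hxy : x < y) (hk : k ≠ 0)
    (hFc : ContinuousOn F (Set.Icc x y))
    (hFd : ∀ s ∈ Set.Ioo x y, HasDerivAt F (f s) s)
    (hlb : ∀ s ∈ Set.Ioo x y, c * Real.exp (k * (s - y)) < f s) :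
    c / k * (1 - Real.exp (k * (x - y))) < F y - F x := by
  have h := aux_lt_of_deriv hxy (by fun_prop) hFc
    (fun s _ => aux_hasDerivAt_exp c k y hk s) hFd hlb
  simp only [sub_self, mul_zero, Real.exp_zero, mul_one] at h
  linarith [h]

open Real Set in
private lemma aux_exp_ub_left {x y c k : ℝ} {F f : ℝ → ℝ} (hxy : x < y) (hk : k ≠ 0)
    (hFc : ContinuousOn F (Set.Icc x y))
    (hFd : ∀ s ∈ Set.Ioo x y, HasDerivAt F (f s) s)
    (hub : ∀ s ∈ Set.Ioo x y, f s < c * Real.exp (k * (s - x))) :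
    F y - F x < c / k * (Real.exp (k * (y - x)) - 1) := by
  have h := aux_lt_of_deriv hxy hFc (by fun_prop) hFd
    (fun s _ => aux_hasDerivAt_exp c k x hk s) hub
  simp only [sub_self, mul_zero, Real.exp_zero, mul_one] at h
  linarith [h]

open Real Set in
private lemma aux_exp_lb_left {x y c k : ℝ} {F f : ℝ → ℝ} (hxy : x < y) (hk : k ≠ 0)
    (hFc : ContinuousOn F (Set.Icc x y))
    (hFd : ∀ s ∈ Set.Ioo x y, HasDerivAt F (f s) s)
    (hlb : ∀ s ∈ Set.Ioo x y, c * Real.exp (k * (s - x)) < f s) :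
    c / k * (Real.exp (k * (y - x)) - 1) < F y - F x := by
  have h := aux_lt_of_deriv hxy (by fun_prop) hFc
    (fun s _ => aux_hasDerivAt_exp c k x hk s) hFd hlb
  simp only [sub_self, mul_zero, Real.exp_zero, mul_one] at h
  linarith [h]

open Real Set in
private lemma aux_log_cont {x y v c k : ℝ} {F : ℝ → ℝ}
    (hFc : ContinuousOn F (Set.Icc x y))
    (hline : ∀ s ∈ Set.Icc x y, 0 < c + k * (F s - v)) :
    ContinuousOn (fun s => (1 / k) * Real.log (c + k * (F s - v))) (Set.Icc x y) := by
  apply ContinuousOn.mul continuousOn_const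
  apply ContinuousOn.log
  · exact continuousOn_const.add (continuousOn_const.mul (hFc.sub continuousOn_const))
  · exact fun s hs => (hline s hs).ne'

open Real Set in
private lemma aux_log_ub {x y v c k : ℝ} {F f : ℝ → ℝ} (hxy : x < y) (hk : k ≠ 0)
    (hFc : ContinuousOn F (Set.Icc x y))
    (hFd : ∀ s ∈ Set.Ioo x y, HasDerivAt F (f s) s)
    (hline : ∀ s ∈ Set.Icc x y, 0 < c + k * (F s - v))
    (hub : ∀ s ∈ Set.Ioo x y, f s < c + k * (F s - v)) :
    (1 / k) * (Real.log (c + k * (F y - v)) - Real.log (c + k * (F x - v))) < y - x := by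
  have h := aux_lt_of_deriv hxy (aux_log_cont hFc hline) (continuous_id.continuousOn)
    (fun s hs => aux_hasDerivAt_log hk (hFd s hs) (hline s (Set.Ioo_subset_Icc_self hs)))
    (fun s _ => hasDerivAt_id s)
    (fun s hs => by
      have h1 := hline s (Set.Ioo_subset_Icc_self hs)
      have h2 := hub s hs
      rw [div_lt_one h1]; exact h2)
  simpa [mul_sub] using h

open Real Set in
private lemma aux_log_lb {x y v c k : ℝ} {F f : ℝ → ℝ} (hxy : x < y) (hk : k ≠ 0)
    (hFc : ContinuousOn F (Set.Icc x y))
    (hFd : ∀ s ∈ Set.Ioo x y, HasDerivAt F (f s) s)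
    (hline : ∀ s ∈ Set.Icc x y, 0 < c + k * (F s - v))
    (hlb : ∀ s ∈ Set.Ioo x y, c + k * (F s - v) < f s) :
    y - x < (1 / k) * (Real.log (c + k * (F y - v)) - Real.log (c + k * (F x - v))) := by
  have h := aux_lt_of_deriv hxy (continuous_id.continuousOn) (aux_log_cont hFc hline)
    (fun s _ => hasDerivAt_id s)
    (fun s hs => aux_hasDerivAt_log hk (hFd s hs) (hline s (Set.Ioo_subset_Icc_self hs)))
    (fun s hs => by
      have h1 := hline s (Set.Ioo_subset_Icc_self hs)
      have h2 := hlb s hs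
      rw [lt_div_iff₀ h1]; linarith)
  simpa [mul_sub] using h

open Real Set in
private lemma dirF_mono {a b : ℝ} {f F : ℝ → ℝ}
    (hfpos : ∀ x ∈ Set.Ioo a b, 0 < f x)
    (hFcont : ContinuousOn F (Set.Icc a b))
    (hFderiv : ∀ s ∈ Set.Ioo a b, HasDerivAt F (f s) s) :
    StrictMonoOn F (Set.Icc a b) := by
  apply strictMonoOn_of_deriv_pos (convex_Icc a b) hFcont
  intro s hs
  rw [interior_Icc] at hs
  rw [(hFderiv s hs).deriv]
  exact hfpos s hs

set_option maxHeartbeats 2000000 in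
open Real Set in
private lemma dir1 {a b : ℝ} {f F : ℝ → ℝ}
    (hfpos : ∀ x ∈ Set.Ioo a b, 0 < f x)
    (hFcont : ContinuousOn F (Set.Icc a b))
    (hFderiv : ∀ s ∈ Set.Ioo a b, HasDerivAt F (f s) s)
    (hs : ∀ ⦃x y z : ℝ⦄, x ∈ Set.Ioo a b → z ∈ Set.Ioo a b → x < y → y < z →
      (Real.log (f z) - Real.log (f y)) / (z - y) < (Real.log (f y) - Real.log (f x)) / (y - x))
    {x y z : ℝ} (hx : x ∈ Set.Ioo a b) (hz : z ∈ Set.Ioo a b) (hxy : x < y) (hyz : y < z) :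
    (f z - f y) / (F z - F y) < (f y - f x) / (F y - F x) := by
  have hy : y ∈ Set.Ioo a b := ⟨hx.1.trans hxy, hyz.trans hz.2⟩
  have hmono := dirF_mono hfpos hFcont hFderiv
  have hxI : x ∈ Set.Icc a b := Set.Ioo_subset_Icc_self hx
  have hyI : y ∈ Set.Icc a b := Set.Ioo_subset_Icc_self hy
  have hzI : z ∈ Set.Icc a b := Set.Ioo_subset_Icc_self hz
  have hd1 : 0 < F y - F x := sub_pos.2 (hmono hxI hyI hxy)
  have hd2 : 0 < F z - F y := sub_pos.2 (hmono hyI hzI hyz)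
  have hc : 0 < f y := hfpos y hy
  set c := f y with hcdef
  set l := (Real.log (f y) - Real.log (f x)) / (y - x) with hldef
  set m := (Real.log (f z) - Real.log (f y)) / (z - y) with hmdef
  have hml : m < l := hs hx hz hxy hyz
  have hl : l * (y - x) = Real.log (f y) - Real.log (f x) :=
    div_mul_cancel₀ _ (sub_pos.2 hxy).ne'
  have hm : m * (z - y) = Real.log (f z) - Real.log (f y) :=
    div_mul_cancel₀ _ (sub_pos.2 hyz).ne'
  have hfx : f x = c * Real.exp (l * (x - y)) := by
    rw [← Real.exp_log (hfpos x hx), ← Real.exp_log hc, ← Real.exp_add]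
    congr 1
    nlinarith [hl]
  have hfz : f z = c * Real.exp (m * (z - y)) := by
    rw [← Real.exp_log (hfpos z hz), ← Real.exp_log hc, ← Real.exp_add]
    congr 1
    nlinarith [hm]
  have hub1 : ∀ s ∈ Set.Ioo x y, f s < c * Real.exp (m * (s - y)) := by
    intro s hsm
    have hsab : s ∈ Set.Ioo a b := ⟨hx.1.trans hsm.1, hsm.2.trans hy.2⟩
    have h3 := hs hsab hz hsm.2 hyz
    rw [← hmdef] at h3
    have h4 : m * (y - s) < Real.log (f y) - Real.log (f s) :=
      (lt_div_iff₀ (sub_pos.2 hsm.2)).1 h3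
    have h5 : Real.log (f s) < Real.log c + m * (s - y) := by nlinarith [h4]
    calc f s = Real.exp (Real.log (f s)) := (Real.exp_log (hfpos s hsab)).symm
      _ < Real.exp (Real.log c + m * (s - y)) := Real.exp_lt_exp.2 h5
      _ = c * Real.exp (m * (s - y)) := by rw [Real.exp_add, Real.exp_log hc]
  have hlb1 : ∀ s ∈ Set.Ioo x y, c * Real.exp (l * (s - y)) < f s := by
    intro s hsm
    have hsab : s ∈ Set.Ioo a b := ⟨hx.1.trans hsm.1, hsm.2.trans hy.2⟩
    have h3 := hs hx hy hsm.1 hsm.2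
    have e1 : (Real.log (f y) - Real.log (f s)) * (s - x) <
        (Real.log (f s) - Real.log (f x)) * (y - s) :=
      (div_lt_div_iff₀ (sub_pos.2 hsm.2) (sub_pos.2 hsm.1)).1 h3
    have h5 : Real.log c + l * (s - y) < Real.log (f s) := by
      have hl2 : l * (y - x) * (y - s) = (Real.log (f y) - Real.log (f x)) * (y - s) := by
        rw [hl]
      nlinarith [e1, hl2, sub_pos.2 hsm.1, sub_pos.2 hsm.2, sub_pos.2 hxy]
    calc c * Real.exp (l * (s - y)) = Real.exp (Real.log c + l * (s - y)) := by
          rw [Real.exp_add, Real.exp_log hc]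
      _ < Real.exp (Real.log (f s)) := Real.exp_lt_exp.2 h5
      _ = f s := Real.exp_log (hfpos s hsab)
  have hub2 : ∀ r ∈ Set.Ioo y z, f r < c * Real.exp (l * (r - y)) := by
    intro r hrm
    have hrab : r ∈ Set.Ioo a b := ⟨hy.1.trans hrm.1, hrm.2.trans hz.2⟩
    have h3 := hs hx hrab hxy hrm.1
    rw [← hldef] at h3
    have h4 : Real.log (f r) - Real.log c < l * (r - y) :=
      (div_lt_iff₀ (sub_pos.2 hrm.1)).1 h3
    calc f r = Real.exp (Real.log (f r)) := (Real.exp_log (hfpos r hrab)).symm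
      _ < Real.exp (Real.log c + l * (r - y)) := Real.exp_lt_exp.2 (by linarith)
      _ = c * Real.exp (l * (r - y)) := by rw [Real.exp_add, Real.exp_log hc]
  have hlb2 : ∀ r ∈ Set.Ioo y z, c * Real.exp (m * (r - y)) < f r := by
    intro r hrm
    have hrab : r ∈ Set.Ioo a b := ⟨hy.1.trans hrm.1, hrm.2.trans hz.2⟩
    have h3 := hs hy hz hrm.1 hrm.2
    have e1 : (Real.log (f z) - Real.log (f r)) * (r - y) <
        (Real.log (f r) - Real.log c) * (z - r) :=
      (div_lt_div_iff₀ (sub_pos.2 hrm.2) (sub_pos.2 hrm.1)).1 h3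
    have h5 : Real.log c + m * (r - y) < Real.log (f r) := by
      have hm2 : m * (z - y) * (r - y) = (Real.log (f z) - Real.log c) * (r - y) := by
        rw [hm]
      nlinarith [e1, hm2, sub_pos.2 hrm.1, sub_pos.2 hrm.2, sub_pos.2 hyz]
    calc c * Real.exp (m * (r - y)) = Real.exp (Real.log c + m * (r - y)) := by
          rw [Real.exp_add, Real.exp_log hc]
      _ < Real.exp (Real.log (f r)) := Real.exp_lt_exp.2 h5
      _ = f r := Real.exp_log (hfpos r hrab)
  have hFcI1 : ContinuousOn F (Set.Icc x y) := hFcont.mono (Set.Icc_subset_Icc hxI.1 hyI.2)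
  have hFcI2 : ContinuousOn F (Set.Icc y z) := hFcont.mono (Set.Icc_subset_Icc hyI.1 hzI.2)
  have hFd1 : ∀ s ∈ Set.Ioo x y, HasDerivAt F (f s) s := fun s hs' =>
    hFderiv s ⟨hx.1.trans hs'.1, hs'.2.trans hy.2⟩
  have hFd2 : ∀ s ∈ Set.Ioo y z, HasDerivAt F (f s) s := fun s hs' =>
    hFderiv s ⟨hy.1.trans hs'.1, hs'.2.trans hz.2⟩
  rw [div_lt_div_iff₀ hd2 hd1, hfx, hfz]
  rcases lt_trichotomy l 0 with hl0 | hl0 | hl0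
  · have hm0 : m < 0 := hml.trans hl0
    have hA := aux_exp_lb hxy hl0.ne hFcI1 hFd1 hlb1
    have hB := aux_exp_ub_left hyz hl0.ne hFcI2 hFd2 hub2
    set E1 := Real.exp (l * (x - y)) with hE1def
    set E3 := Real.exp (m * (z - y)) with hE3def
    set E4 := Real.exp (l * (z - y)) with hE4def
    have hE1 : 1 < E1 := Real.one_lt_exp_iff.2 (mul_pos_of_neg_of_neg hl0 (by linarith))
    have hE34 : E3 < E4 := Real.exp_lt_exp.2 (by nlinarith)
    have hE4 : E4 < 1 := Real.exp_lt_one_iff.2 (mul_neg_of_neg_of_pos hl0 (by linarith))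
    have hE3 : E3 < 1 := hE34.trans hE4
    have hD : 0 < c / l * (1 - E1) := by
      have h1 : c / l < 0 := div_neg_of_pos_of_neg hc hl0
      nlinarith
    have t1 : (E3 - 1) * (F y - F x) < (E3 - 1) * (c / l * (1 - E1)) :=
      mul_lt_mul_of_neg_left hA (by linarith)
    have t2 : (1 - E1) * (c / l * (E4 - 1)) < (1 - E1) * (F z - F y) :=
      mul_lt_mul_of_neg_left hB (by linarith)
    have t3 : (E3 - 1) * (c / l * (1 - E1)) ≤ (1 - E1) * (c / l * (E4 - 1)) := by
      nlinarith [mul_le_mul_of_nonneg_left hE34.le hD.le]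
    have t4 : (E3 - 1) * (F y - F x) < (1 - E1) * (F z - F y) := by linarith
    nlinarith [mul_lt_mul_of_pos_left t4 hc]
  · have hm0 : m < 0 := by rw [hl0] at hml; exact hml
    have hE3 : Real.exp (m * (z - y)) < 1 :=
      Real.exp_lt_one_iff.2 (mul_neg_of_neg_of_pos hm0 (by linarith))
    rw [hl0]
    simp only [zero_mul, Real.exp_zero, mul_one, sub_self]
    have r1 : c * Real.exp (m * (z - y)) - c < 0 := by nlinarith
    nlinarith [mul_neg_of_neg_of_pos r1 hd1]
  · rcases le_or_gt m 0 with hm0 | hm0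
    · have hE1 : Real.exp (l * (x - y)) < 1 :=
        Real.exp_lt_one_iff.2 (mul_neg_of_pos_of_neg hl0 (by linarith))
      have hE3 : Real.exp (m * (z - y)) ≤ 1 :=
        Real.exp_le_one_iff.2 (mul_nonpos_of_nonpos_of_nonneg hm0 (by linarith))
      have r1 : (c * Real.exp (m * (z - y)) - c) * (F y - F x) ≤ 0 :=
        mul_nonpos_of_nonpos_of_nonneg (by nlinarith) hd1.le
      have r2 : 0 < (c - c * Real.exp (l * (x - y))) * (F z - F y) :=
        mul_pos (by nlinarith) hd2
      linarith
    · have hA := aux_exp_ub hxy hm0.ne' hFcI1 hFd1 hub1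
      have hB := aux_exp_lb_left hyz hm0.ne' hFcI2 hFd2 hlb2
      set E1 := Real.exp (l * (x - y)) with hE1def
      set E2 := Real.exp (m * (x - y)) with hE2def
      set E3 := Real.exp (m * (z - y)) with hE3def
      have hE12 : E1 < E2 := Real.exp_lt_exp.2 (by nlinarith)
      have hE2 : E2 < 1 := Real.exp_lt_one_iff.2 (mul_neg_of_pos_of_neg hm0 (by linarith))
      have hE3 : 1 < E3 := Real.one_lt_exp_iff.2 (mul_pos hm0 (by linarith))
      have hcm : 0 < c / m := div_pos hc hm0
      have t1 : (E3 - 1) * (F y - F x) < (E3 - 1) * (c / m * (1 - E2)) :=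
        mul_lt_mul_of_pos_left hA (by linarith)
      have t2 : (1 - E1) * (c / m * (E3 - 1)) < (1 - E1) * (F z - F y) :=
        mul_lt_mul_of_pos_left hB (by linarith)
      have t3 : (E3 - 1) * (c / m * (1 - E2)) ≤ (1 - E1) * (c / m * (E3 - 1)) := by
        nlinarith [mul_le_mul_of_nonneg_left hE12.le
          (mul_nonneg hcm.le (by linarith : (0:ℝ) ≤ E3 - 1))]
      have t4 : (E3 - 1) * (F y - F x) < (1 - E1) * (F z - F y) := by linarith
      nlinarith [mul_lt_mul_of_pos_left t4 hc]

set_option maxHeartbeats 2000000 in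
open Real Set in
private lemma dir2 {a b : ℝ} {f F : ℝ → ℝ}
    (hfpos : ∀ x ∈ Set.Ioo a b, 0 < f x)
    (hFcont : ContinuousOn F (Set.Icc a b))
    (hFderiv : ∀ s ∈ Set.Ioo a b, HasDerivAt F (f s) s)
    (hs : ∀ ⦃x y z : ℝ⦄, x ∈ Set.Ioo a b → z ∈ Set.Ioo a b → x < y → y < z →
      (f z - f y) / (F z - F y) < (f y - f x) / (F y - F x))
    {x y z : ℝ} (hx : x ∈ Set.Ioo a b) (hz : z ∈ Set.Ioo a b) (hxy : x < y) (hyz : y < z) :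
    (Real.log (f z) - Real.log (f y)) / (z - y) <
      (Real.log (f y) - Real.log (f x)) / (y - x) := by
  have hy : y ∈ Set.Ioo a b := ⟨hx.1.trans hxy, hyz.trans hz.2⟩
  have hmono := dirF_mono hfpos hFcont hFderiv
  have hxI : x ∈ Set.Icc a b := Set.Ioo_subset_Icc_self hx
  have hyI : y ∈ Set.Icc a b := Set.Ioo_subset_Icc_self hy
  have hzI : z ∈ Set.Icc a b := Set.Ioo_subset_Icc_self hz
  have hd1 : 0 < F y - F x := sub_pos.2 (hmono hxI hyI hxy)
  have hd2 : 0 < F z - F y := sub_pos.2 (hmono hyI hzI hyz)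
  have hc : 0 < f y := hfpos y hy
  have hfx0 : 0 < f x := hfpos x hx
  have hfz0 : 0 < f z := hfpos z hz
  set c := f y with hcdef
  set k1 := (f y - f x) / (F y - F x) with hk1def
  set k2 := (f z - f y) / (F z - F y) with hk2def
  have hk : k2 < k1 := hs hx hz hxy hyz
  have hk1 : k1 * (F y - F x) = f y - f x := div_mul_cancel₀ _ hd1.ne'
  have hk2e : k2 * (F z - F y) = f z - f y := div_mul_cancel₀ _ hd2.ne'
  have hgu : f x = c + k1 * (F x - F y) := by nlinarith [hk1]
  have hgw : f z = c + k2 * (F z - F y) := by nlinarith [hk2e]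
  have hmle := hmono.monotoneOn
  have hFxs : ∀ s ∈ Set.Icc x y, F x ≤ F s ∧ F s ≤ F y := by
    intro s hsm
    have hsI : s ∈ Set.Icc a b := ⟨hx.1.le.trans hsm.1, hsm.2.trans hy.2.le⟩
    exact ⟨hmle hxI hsI hsm.1, hmle hsI hyI hsm.2⟩
  have hFrs : ∀ s ∈ Set.Icc y z, F y ≤ F s ∧ F s ≤ F z := by
    intro s hsm
    have hsI : s ∈ Set.Icc a b := ⟨hy.1.le.trans hsm.1, hsm.2.trans hz.2.le⟩
    exact ⟨hmle hyI hsI hsm.1, hmle hsI hzI hsm.2⟩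
  have hlb1 : ∀ s ∈ Set.Ioo x y, c + k1 * (F s - F y) < f s := by
    intro s hsm
    have hsab : s ∈ Set.Ioo a b := ⟨hx.1.trans hsm.1, hsm.2.trans hy.2⟩
    have hsI : s ∈ Set.Icc a b := Set.Ioo_subset_Icc_self hsab
    have hds1 : 0 < F s - F x := sub_pos.2 (hmono hxI hsI hsm.1)
    have hds2 : 0 < F y - F s := sub_pos.2 (hmono hsI hyI hsm.2)
    have h3 := hs hx hy hsm.1 hsm.2
    have e1 : (f y - f s) * (F s - F x) < (f s - f x) * (F y - F s) :=
      (div_lt_div_iff₀ hds2 hds1).1 h3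
    have hk1m : k1 * (F y - F x) * (F y - F s) = (f y - f x) * (F y - F s) := by rw [hk1]
    have h6 : 0 < (f s - (c + k1 * (F s - F y))) * (F y - F x) := by nlinarith [e1, hk1m]
    have h7 := div_pos h6 hd1
    rw [mul_div_cancel_right₀ _ hd1.ne'] at h7
    linarith
  have hub1 : ∀ s ∈ Set.Ioo x y, f s < c + k2 * (F s - F y) := by
    intro s hsm
    have hsab : s ∈ Set.Ioo a b := ⟨hx.1.trans hsm.1, hsm.2.trans hy.2⟩
    have hsI : s ∈ Set.Icc a b := Set.Ioo_subset_Icc_self hsab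
    have hds2 : 0 < F y - F s := sub_pos.2 (hmono hsI hyI hsm.2)
    have h3 := hs hsab hz hsm.2 hyz
    rw [← hk2def] at h3
    have h4 : k2 * (F y - F s) < f y - f s := (lt_div_iff₀ hds2).1 h3
    linarith
  have hlb2 : ∀ r ∈ Set.Ioo y z, c + k2 * (F r - F y) < f r := by
    intro r hrm
    have hrab : r ∈ Set.Ioo a b := ⟨hy.1.trans hrm.1, hrm.2.trans hz.2⟩
    have hrI : r ∈ Set.Icc a b := Set.Ioo_subset_Icc_self hrab
    have hdr1 : 0 < F r - F y := sub_pos.2 (hmono hyI hrI hrm.1)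
    have hdr2 : 0 < F z - F r := sub_pos.2 (hmono hrI hzI hrm.2)
    have h3 := hs hy hz hrm.1 hrm.2
    have e1 : (f z - f r) * (F r - F y) < (f r - c) * (F z - F r) :=
      (div_lt_div_iff₀ hdr2 hdr1).1 h3
    have hk2m : k2 * (F z - F y) * (F r - F y) = (f z - c) * (F r - F y) := by rw [hk2e]
    have h6 : 0 < (f r - (c + k2 * (F r - F y))) * (F z - F y) := by nlinarith [e1, hk2m]
    have h7 := div_pos h6 hd2
    rw [mul_div_cancel_right₀ _ hd2.ne'] at h7
    linarith
  have hub2 : ∀ r ∈ Set.Ioo y z, f r < c + k1 * (F r - F y) := by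
    intro r hrm
    have hrab : r ∈ Set.Ioo a b := ⟨hy.1.trans hrm.1, hrm.2.trans hz.2⟩
    have hrI : r ∈ Set.Icc a b := Set.Ioo_subset_Icc_self hrab
    have hdr1 : 0 < F r - F y := sub_pos.2 (hmono hyI hrI hrm.1)
    have h3 := hs hx hrab hxy hrm.1
    rw [← hk1def] at h3
    have h4 : f r - c < k1 * (F r - F y) := (div_lt_iff₀ hdr1).1 h3
    linarith
  have hFcI1 : ContinuousOn F (Set.Icc x y) := hFcont.mono (Set.Icc_subset_Icc hxI.1 hyI.2)
  have hFcI2 : ContinuousOn F (Set.Icc y z) := hFcont.mono (Set.Icc_subset_Icc hyI.1 hzI.2)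
  have hFd1 : ∀ s ∈ Set.Ioo x y, HasDerivAt F (f s) s := fun s hs' =>
    hFderiv s ⟨hx.1.trans hs'.1, hs'.2.trans hy.2⟩
  have hFd2 : ∀ s ∈ Set.Ioo y z, HasDerivAt F (f s) s := fun s hs' =>
    hFderiv s ⟨hy.1.trans hs'.1, hs'.2.trans hz.2⟩
  rw [div_lt_div_iff₀ (sub_pos.2 hyz) (sub_pos.2 hxy)]
  rcases lt_trichotomy k1 0 with hk10 | hk10 | hk10
  · have hk20 : k2 < 0 := hk.trans hk10
    have hfxc : c < f x := by
      have h1 : 0 < k1 * (F x - F y) := mul_pos_of_neg_of_neg hk10 (by linarith)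
      linarith [hgu]
    have hfzc : f z < c := by
      have h1 : k2 * (F z - F y) < 0 := mul_neg_of_neg_of_pos hk20 hd2
      linarith [hgw]
    have hP : Real.log c - Real.log (f x) < 0 := by
      have := Real.log_lt_log hc hfxc; linarith
    have hQ : Real.log (f z) - Real.log c < 0 := by
      have := Real.log_lt_log hfz0 hfzc; linarith
    have hline1 : ∀ s ∈ Set.Icc x y, 0 < c + k2 * (F s - F y) := by
      intro s hsm
      have h8 := (hFxs s hsm).2
      nlinarith [mul_nonneg (neg_nonneg.2 hk20.le) (sub_nonneg.2 h8)]
    have hline2 : ∀ s ∈ Set.Icc y z, 0 < c + k2 * (F s - F y) := by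
      intro s hsm
      have h8 := (hFrs s hsm).2
      nlinarith [mul_nonneg (neg_nonneg.2 hk20.le) (sub_nonneg.2 h8), hgw, hfz0]
    have hiii := aux_log_ub hxy hk20.ne hFcI1 hFd1 hline1 hub1
    have hiv := aux_log_lb hyz hk20.ne hFcI2 hFd2 hline2 hlb2
    simp only [sub_self, mul_zero, add_zero] at hiii hiv
    rw [← hgw] at hiv
    set M := c + k2 * (F x - F y) with hMdef
    have hM0 : 0 < M := hline1 x (Set.left_mem_Icc.2 hxy.le)
    have hfxM : f x < M := by
      have h1 : (k1 - k2) * (F x - F y) < 0 :=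
        mul_neg_of_pos_of_neg (sub_pos.2 hk) (by linarith)
      nlinarith [hgu]
    have hlogM : Real.log (f x) < Real.log M := Real.log_lt_log hfx0 hfxM
    have h1 : 1 / k2 < 0 := div_neg_of_pos_of_neg one_pos hk20
    have hkey : (1 / k2) * (Real.log c - Real.log (f x)) <
        (1 / k2) * (Real.log c - Real.log M) :=
      mul_lt_mul_of_neg_left (by linarith) h1
    have c1 : (Real.log (f z) - Real.log c) * (y - x) <
        (Real.log (f z) - Real.log c) * ((1 / k2) * (Real.log c - Real.log M)) :=
      mul_lt_mul_of_neg_left hiii hQ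
    have c2 : (Real.log (f z) - Real.log c) * ((1 / k2) * (Real.log c - Real.log M)) <
        (Real.log (f z) - Real.log c) * ((1 / k2) * (Real.log c - Real.log (f x))) :=
      mul_lt_mul_of_neg_left hkey hQ
    have c3 : (Real.log c - Real.log (f x)) * ((1 / k2) * (Real.log (f z) - Real.log c)) <
        (Real.log c - Real.log (f x)) * (z - y) :=
      mul_lt_mul_of_neg_left hiv hP
    nlinarith [c1, c2, c3]
  · have hk20 : k2 < 0 := by rw [hk10] at hk; exact hk
    have hfxc : f x = c := by rw [hgu, hk10]; ring
    have hfzc : f z < c := by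
      have h1 : k2 * (F z - F y) < 0 := mul_neg_of_neg_of_pos hk20 hd2
      linarith [hgw]
    have hQ : Real.log (f z) - Real.log c < 0 := by
      have := Real.log_lt_log hfz0 hfzc; linarith
    rw [hfxc]
    have r1 := mul_neg_of_neg_of_pos hQ (sub_pos.2 hxy)
    nlinarith [r1]
  · have hfxc : f x < c := by
      have h1 : k1 * (F x - F y) < 0 := mul_neg_of_pos_of_neg hk10 (by linarith)
      linarith [hgu]
    have hP : 0 < Real.log c - Real.log (f x) := by
      have := Real.log_lt_log hfx0 hfxc; linarith
    have hline1 : ∀ s ∈ Set.Icc x y, 0 < c + k1 * (F s - F y) := by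
      intro s hsm
      have h8 := (hFxs s hsm).1
      nlinarith [mul_nonneg hk10.le (sub_nonneg.2 h8), hgu, hfx0]
    have hline2 : ∀ s ∈ Set.Icc y z, 0 < c + k1 * (F s - F y) := by
      intro s hsm
      have h8 := (hFrs s hsm).1
      nlinarith [mul_nonneg hk10.le (sub_nonneg.2 h8), hc]
    have hi := aux_log_lb hxy hk10.ne' hFcI1 hFd1 hline1 hlb1
    have hii := aux_log_ub hyz hk10.ne' hFcI2 hFd2 hline2 hub2
    simp only [sub_self, mul_zero, add_zero] at hi hii
    rw [← hgu] at hi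
    set N := c + k1 * (F z - F y) with hNdef
    have hN0 : 0 < N := hline2 z (Set.right_mem_Icc.2 hyz.le)
    have hfzN : f z < N := by
      have h1 : (k2 - k1) * (F z - F y) < 0 := mul_neg_of_neg_of_pos (by linarith) hd2
      nlinarith [hgw]
    have hQN : Real.log (f z) < Real.log N := Real.log_lt_log hfz0 hfzN
    rcases le_or_gt (Real.log (f z) - Real.log c) 0 with hQ | hQ
    · have r1 : (Real.log (f z) - Real.log c) * (y - x) ≤ 0 :=
        mul_nonpos_of_nonpos_of_nonneg hQ (by linarith)
      have r2 : 0 < (Real.log c - Real.log (f x)) * (z - y) := mul_pos hP (by linarith)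
      linarith
    · have c1 : (Real.log (f z) - Real.log c) * (y - x) <
          (Real.log (f z) - Real.log c) * ((1 / k1) * (Real.log c - Real.log (f x))) :=
        mul_lt_mul_of_pos_left hi hQ
      have c2 : (Real.log c - Real.log (f x)) * ((1 / k1) * (Real.log N - Real.log c)) <
          (Real.log c - Real.log (f x)) * (z - y) :=
        mul_lt_mul_of_pos_left hii hP
      have h1 : 0 < 1 / k1 := by positivity
      have c3 : (Real.log (f z) - Real.log c) * ((1 / k1) * (Real.log c - Real.log (f x))) ≤
          (Real.log c - Real.log (f x)) * ((1 / k1) * (Real.log N - Real.log c)) := by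
        nlinarith [mul_le_mul_of_nonneg_left
          (by linarith [hQN] : Real.log (f z) - Real.log c ≤ Real.log N - Real.log c)
          (mul_nonneg h1.le hP.le)]
      linarith [c1, c2, c3]

open Real MeasureTheory intervalIntegral in
theorem stmt_9 (a b : ℝ) (hab : a < b) (f : ℝ → ℝ)
    (hfpos : ∀ x ∈ Set.Ioo a b, 0 < f x)
    (hfint : ∫ x in a..b, f x = 1)
    (F Finv : ℝ → ℝ)
    (hF : ∀ x, F x = ∫ t in a..x, f t)
    (hFinv₁ : ∀ x ∈ Set.Icc a b, Finv (F x) = x)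
    (hFinv₂ : ∀ u ∈ Set.Icc (0:ℝ) 1, F (Finv u) = u) :
    StrictConcaveOn ℝ (Set.Ioo a b) (fun x => Real.log (f x))
      ↔ StrictConcaveOn ℝ (Set.Ioo (0:ℝ) 1) (fun u => f (Finv u)) := by
  -- integrability
  have hfi : IntervalIntegrable f volume a b := by
    by_contra h
    rw [intervalIntegral.integral_undef h] at hfint
    norm_num at hfint
  have hsub : ∀ x ∈ Set.Icc a b, ∀ y ∈ Set.Icc a b, IntervalIntegrable f volume x y := by
    intro x hx y hy
    refine hfi.mono_set ?_
    rw [Set.uIcc_subset_uIcc_iff_mem, Set.uIcc_of_le hab.le]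
    exact ⟨hx, hy⟩
  have haI : a ∈ Set.Icc a b := Set.left_mem_Icc.2 hab.le
  have hbI : b ∈ Set.Icc a b := Set.right_mem_Icc.2 hab.le
  have hFdiff : ∀ x ∈ Set.Icc a b, ∀ y ∈ Set.Icc a b, F y - F x = ∫ t in x..y, f t := by
    intro x hx y hy
    rw [hF, hF, ← intervalIntegral.integral_add_adjacent_intervals (hsub a haI x hx)
      (hsub x hx y hy)]
    ring
  have hFlt : ∀ x ∈ Set.Icc a b, ∀ y ∈ Set.Icc a b, x < y → F x < F y := by
    intro x hx y hy hxy
    have h1 : 0 < ∫ t in x..y, f t := by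
      apply intervalIntegral_pos_of_pos_on (hsub x hx y hy) _ hxy
      intro t ht
      exact hfpos t ⟨lt_of_le_of_lt hx.1 ht.1, lt_of_lt_of_le ht.2 hy.2⟩
    have h2 := hFdiff x hx y hy
    linarith
  have hFa : F a = 0 := by rw [hF]; exact intervalIntegral.integral_same
  have hFb : F b = 1 := by rw [hF]; exact hfint
  have hFcont : ContinuousOn F (Set.Icc a b) := by
    have h := intervalIntegral.continuousOn_primitive_interval' (μ := volume) hfi
      Set.left_mem_uIcc
    rw [Set.uIcc_of_le hab.le] at h
    exact h.congr fun x _ => hF x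
  have hFmemIoo : ∀ x ∈ Set.Ioo a b, F x ∈ Set.Ioo (0:ℝ) 1 := by
    intro x hx
    constructor
    · rw [← hFa]; exact hFlt a haI x (Set.Ioo_subset_Icc_self hx) hx.1
    · rw [← hFb]; exact hFlt x (Set.Ioo_subset_Icc_self hx) b hbI hx.2
  have hIVT : ∀ u ∈ Set.Icc (0:ℝ) 1, ∃ x ∈ Set.Icc a b, F x = u := by
    intro u hu
    have h := intermediate_value_Icc hab.le hFcont
    rw [hFa, hFb] at h
    exact h hu
  have hFinvIoo : ∀ u ∈ Set.Ioo (0:ℝ) 1, Finv u ∈ Set.Ioo a b := by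
    intro u hu
    obtain ⟨x, hx, hFx⟩ := hIVT u (Set.Ioo_subset_Icc_self hu)
    have hfe : Finv u = x := by rw [← hFx, hFinv₁ x hx]
    rw [hfe]
    constructor
    · rcases eq_or_lt_of_le hx.1 with h | h
      · exfalso; rw [← h, hFa] at hFx; exact absurd hFx.symm (ne_of_gt hu.1)
      · exact h
    · rcases eq_or_lt_of_le hx.2 with h | h
      · exfalso; rw [h, hFb] at hFx; exact absurd hFx.symm (ne_of_lt hu.2)
      · exact h
  have hFFinv : ∀ u ∈ Set.Ioo (0:ℝ) 1, F (Finv u) = u := fun u hu =>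
    hFinv₂ u (Set.Ioo_subset_Icc_self hu)
  have hFinvlt : ∀ u ∈ Set.Ioo (0:ℝ) 1, ∀ v ∈ Set.Ioo (0:ℝ) 1, u < v → Finv u < Finv v := by
    intro u hu v hv huv
    by_contra h
    push_neg at h
    rcases eq_or_lt_of_le h with he | hlt
    · have : v = u := by rw [← hFFinv v hv, ← hFFinv u hu, he]
      linarith
    · have h1 := hFlt _ (Set.Ioo_subset_Icc_self (hFinvIoo v hv)) _
        (Set.Ioo_subset_Icc_self (hFinvIoo u hu)) hlt
      rw [hFFinv v hv, hFFinv u hu] at h1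
      linarith
  have hFderiv_of : ContinuousOn f (Set.Ioo a b) →
      ∀ s ∈ Set.Ioo a b, HasDerivAt F (f s) s := by
    intro hfc s hsm
    have hca : ContinuousAt f s := hfc.continuousAt (Ioo_mem_nhds hsm.1 hsm.2)
    have hmeas := ContinuousOn.stronglyMeasurableAtFilter (μ := volume) isOpen_Ioo hfc s hsm
    have h := intervalIntegral.integral_hasDerivAt_right
      (hsub a haI s (Set.Ioo_subset_Icc_self hsm)) hmeas hca
    have hFe : F = fun u => ∫ t in a..u, f t := funext hF
    rw [hFe]
    exact h
  constructor
  · intro hφ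
    have hφc : ContinuousOn (fun x => Real.log (f x)) (Set.Ioo a b) :=
      hφ.concaveOn.continuousOn isOpen_Ioo
    have hfc : ContinuousOn f (Set.Ioo a b) :=
      (Real.continuous_exp.comp_continuousOn hφc).congr
        fun x hx => (Real.exp_log (hfpos x hx)).symm
    have hFderiv := hFderiv_of hfc
    have hslope : ∀ ⦃x y z : ℝ⦄, x ∈ Set.Ioo a b → z ∈ Set.Ioo a b → x < y → y < z →
        (Real.log (f z) - Real.log (f y)) / (z - y) <
          (Real.log (f y) - Real.log (f x)) / (y - x) :=
      fun x y z hx hz h1 h2 =>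
        (strictConcaveOn_iff_slope_strict_anti_adjacent.1 hφ).2 hx hz h1 h2
    rw [strictConcaveOn_iff_slope_strict_anti_adjacent]
    refine ⟨convex_Ioo 0 1, fun u v w hu hw huv hvw => ?_⟩
    have hv : v ∈ Set.Ioo (0:ℝ) 1 := ⟨hu.1.trans huv, hvw.trans hw.2⟩
    have hxm := hFinvIoo u hu
    have hym := hFinvIoo v hv
    have hzm := hFinvIoo w hw
    have hxy := hFinvlt u hu v hv huv
    have hyz := hFinvlt v hv w hw hvw
    have e1 : v - u = F (Finv v) - F (Finv u) := by rw [hFFinv v hv, hFFinv u hu]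
    have e2 : w - v = F (Finv w) - F (Finv v) := by rw [hFFinv w hw, hFFinv v hv]
    have h := dir1 hfpos hFcont hFderiv hslope hxm hzm hxy hyz
    show (f (Finv w) - f (Finv v)) / (w - v) < (f (Finv v) - f (Finv u)) / (v - u)
    rw [e1, e2]
    exact h
  · intro hg
    have hgc : ContinuousOn (fun u => f (Finv u)) (Set.Ioo (0:ℝ) 1) :=
      hg.concaveOn.continuousOn isOpen_Ioo
    have hfc : ContinuousOn f (Set.Ioo a b) := by
      have h1 : ContinuousOn (fun x => f (Finv (F x))) (Set.Ioo a b) :=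
        hgc.comp (hFcont.mono Set.Ioo_subset_Icc_self) (fun x hx => hFmemIoo x hx)
      exact h1.congr fun x hx => by show f x = f (Finv (F x)); rw [hFinv₁ x (Set.Ioo_subset_Icc_self hx)]
    have hFderiv := hFderiv_of hfc
    have hgslope := (strictConcaveOn_iff_slope_strict_anti_adjacent.1 hg).2
    have hs' : ∀ ⦃x y z : ℝ⦄, x ∈ Set.Ioo a b → z ∈ Set.Ioo a b → x < y → y < z →
        (f z - f y) / (F z - F y) < (f y - f x) / (F y - F x) := by
      intro x y z hx hz h1 h2
      have hy : y ∈ Set.Ioo a b := ⟨hx.1.trans h1, h2.trans hz.2⟩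
      have h3 := hgslope (hFmemIoo x hx) (hFmemIoo z hz)
        (hFlt x (Set.Ioo_subset_Icc_self hx) y (Set.Ioo_subset_Icc_self hy) h1)
        (hFlt y (Set.Ioo_subset_Icc_self hy) z (Set.Ioo_subset_Icc_self hz) h2)
      simpa only [hFinv₁ x (Set.Ioo_subset_Icc_self hx),
        hFinv₁ y (Set.Ioo_subset_Icc_self hy),
        hFinv₁ z (Set.Ioo_subset_Icc_self hz)] using h3
    rw [strictConcaveOn_iff_slope_strict_anti_adjacent]
    exact ⟨convex_Ioo a b, fun x y z hx hz h1 h2 => dir2 hfpos hFcont hFderiv hs' hx hz h1 h2⟩
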